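/- Boost-link theorem: Given three unit timelike future-pointing vectors s, s₁, s₂ in Minkowski space with γ₁ = -η(s,s₁), γ₂ = -η(s,s₂), γ₁₂ = -η(s₁,s₂), there exists a unique vector β ∈ T_s𝒮 = {u : η(u,s) = 0} with ‖β‖ < 1 such that the pure boost B(s,β) relative to s maps s₁ to s₂, and it is given by β = ((γ₁+γ₂)/(γ₁² + γ₂² + γ₁₂ - 1)) · P_s^⊥(s₂ - s₁), where P_s^⊥(v) = v + η(v,s)·s. -/

import Mathlib

set_option maxHeartbeats 1000000 in
/-- Boost-link theorem: given states of motion `s, s₁, s₂`, there is a unique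
velocity `β` orthogonal to `s` with `‖β‖ < 1` such that the pure boost
relative to `s` with velocity `β` maps `s₁` to `s₂`; it is given by
`β = ((γ₁+γ₂)/(γ₁²+γ₂²+γ₁₂-1)) • P_s^⊥(s₂ - s₁)`. -/
theorem boost_link_theorem (V : Type*) [AddCommGroup V] [Module ℝ V]
    (η : LinearMap.BilinForm ℝ V) (hsymm : ∀ u v, η u v = η v u)
    (s s₁ s₂ : V)
    (hpos : ∀ u, η s u = 0 → u ≠ 0 → 0 < η u u)
    (hs : η s s = -1) (hs₁ : η s₁ s₁ = -1) (hs₂ : η s₂ s₂ = -1)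
    (γ₁ γ₂ γ₁₂ : ℝ)
    (hγ₁ : η s s₁ = -γ₁) (hγ₂ : η s s₂ = -γ₂) (hγ₁₂ : η s₁ s₂ = -γ₁₂)
    (h1 : 1 ≤ γ₁) (h2 : 1 ≤ γ₂) (h12 : 1 ≤ γ₁₂)
    (Bst : V → V → V)
    (hBst : ∀ b v, Bst b v =
      v + ((1 - (Real.sqrt (1 - η b b))⁻¹) * η s v) • s +
        (((Real.sqrt (1 - η b b))⁻¹ ^ 2 / ((Real.sqrt (1 - η b b))⁻¹ + 1)) *
            η b v) • b +
        (Real.sqrt (1 - η b b))⁻¹ • ((η b v) • s - (η s v) • b))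
    (βv : V)
    (hβv : βv = ((γ₁ + γ₂) / (γ₁ ^ 2 + γ₂ ^ 2 + γ₁₂ - 1)) •
      (s₂ - s₁ + (η (s₂ - s₁) s) • s)) :
    (η s βv = 0 ∧ η βv βv < 1 ∧ Bst βv s₁ = s₂) ∧
      ∀ b, η s b = 0 → η b b < 1 → Bst b s₁ = s₂ → b = βv := by
  have hs₁s : η s₁ s = -γ₁ := by rw [hsymm]; exact hγ₁
  have hs₂s : η s₂ s = -γ₂ := by rw [hsymm]; exact hγ₂
  have hs₂s₁ : η s₂ s₁ = -γ₁₂ := by rw [hsymm]; exact hγ₁₂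
  -- Cauchy–Schwarz on the spatial parts: γ₁₂ ≤ 2γ₁γ₂ - 1
  have hq : ∀ x : ℝ, 0 ≤ (γ₂^2-1)*(x*x) + (2*(γ₁*γ₂-γ₁₂))*x + (γ₁^2-1) := by
    intro x
    have hvv : η (s₁ - γ₁ • s + x • (s₂ - γ₂ • s)) (s₁ - γ₁ • s + x • (s₂ - γ₂ • s))
        = (γ₂^2-1)*(x*x) + (2*(γ₁*γ₂-γ₁₂))*x + (γ₁^2-1) := by
      simp only [map_add, map_sub, map_smul, LinearMap.add_apply, LinearMap.sub_apply,
        LinearMap.smul_apply, smul_eq_mul, hs, hs₁, hs₂, hγ₁, hγ₂, hγ₁₂, hs₁s, hs₂s, hs₂s₁]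
      ring
    rw [← hvv]
    rcases eq_or_ne (s₁ - γ₁ • s + x • (s₂ - γ₂ • s)) 0 with h | h
    · rw [h]; simp
    · refine le_of_lt (hpos _ ?_ h)
      simp only [map_add, map_sub, map_smul, smul_eq_mul, hs, hγ₁, hγ₂]
      ring
  have hdisc := discrim_le_zero hq
  rw [discrim] at hdisc
  have hCS : γ₁₂ ≤ 2*γ₁*γ₂ - 1 := by
    nlinarith [sq_nonneg (γ₁ - γ₂), sq_nonneg (γ₁*γ₂ - γ₁₂), sq_nonneg (γ₁*γ₂ - 1),
      mul_nonneg (sub_nonneg.2 h1) (sub_nonneg.2 h2)]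
  have hDpos : (0:ℝ) < γ₁^2 + γ₂^2 + γ₁₂ - 1 := by nlinarith
  set D : ℝ := γ₁^2 + γ₂^2 + γ₁₂ - 1 with hD
  have hEpos : (0:ℝ) < 2*γ₁*γ₂ - γ₁₂ + 1 := by nlinarith
  set E : ℝ := 2*γ₁*γ₂ - γ₁₂ + 1 with hE
  have hD0 : D ≠ 0 := ne_of_gt hDpos
  have hE0 : E ≠ 0 := ne_of_gt hEpos
  have hsum : (0:ℝ) < γ₁ + γ₂ := by linarith
  have hsum0 : γ₁ + γ₂ ≠ 0 := ne_of_gt hsum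
  have hDE : D + E = (γ₁ + γ₂)^2 := by rw [hD, hE]; ring
  -- rewrite hβv
  have hslack : η (s₂ - s₁) s = γ₁ - γ₂ := by
    simp only [map_sub, LinearMap.sub_apply, hs₂s, hs₁s]; ring
  rw [hslack] at hβv
  -- orthogonality
  have horth : η s βv = 0 := by
    rw [hβv]
    simp only [map_add, map_sub, map_smul, smul_eq_mul, hs, hγ₁, hγ₂]
    ring
  -- norm of βv
  have hnorm : η βv βv = 1 - (E/D)^2 := by
    rw [hβv]
    simp only [map_add, map_sub, map_smul, LinearMap.add_apply, LinearMap.sub_apply,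
      LinearMap.smul_apply, smul_eq_mul, hs, hs₁, hs₂, hγ₁, hγ₂, hγ₁₂, hs₁s, hs₂s, hs₂s₁]
    field_simp
    ring
  have hEDpos : (0:ℝ) < E/D := div_pos hEpos hDpos
  have hlt : η βv βv < 1 := by
    have h' : (0:ℝ) < (E/D)^2 := by positivity
    rw [hnorm]; linarith
  have hsqrt : Real.sqrt (1 - η βv βv) = E/D := by
    rw [hnorm, show (1 : ℝ) - (1 - (E/D)^2) = (E/D)^2 by ring]
    exact Real.sqrt_sq (le_of_lt hEDpos)
  have hginv : (Real.sqrt (1 - η βv βv))⁻¹ = D/E := by rw [hsqrt, inv_div]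
  have hts : η βv s₁ = (γ₁ + γ₂)/D * (1 - γ₁₂ + γ₁*γ₂ - γ₁^2) := by
    rw [hβv]
    simp only [map_add, map_sub, map_smul, LinearMap.add_apply, LinearMap.sub_apply,
      LinearMap.smul_apply, smul_eq_mul, hs, hs₁, hs₂, hγ₁, hγ₂, hγ₁₂, hs₁s, hs₂s, hs₂s₁]
    ring
  have hgp1 : D/E + 1 = (γ₁+γ₂)^2/E := by
    rw [← hDE]; field_simp
  have hco : (D/E)^2/(D/E+1) = D^2/(E*(γ₁+γ₂)^2) := by
    rw [hgp1]; field_simp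
  have hBmain : Bst βv s₁ = s₂ := by
    rw [hBst, hginv, hco, hγ₁, hts, hβv]
    match_scalars
    · field_simp
      ring
    · field_simp
      ring
    · field_simp
      ring
  refine ⟨⟨horth, hlt, hBmain⟩, ?_⟩
  -- uniqueness
  intro b hbs hbb hB
  have hbs' : η b s = 0 := by rw [hsymm]; exact hbs
  have hbb0 : 0 ≤ η b b := by
    rcases eq_or_ne b 0 with h | h
    · rw [h]; simp
    · exact le_of_lt (hpos b hbs h)
  have h1b : (0:ℝ) < 1 - η b b := by linarith
  have hupos : 0 < Real.sqrt (1 - η b b) := Real.sqrt_pos.2 h1b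
  have hu : Real.sqrt (1 - η b b) ≠ 0 := ne_of_gt hupos
  have hu1 : Real.sqrt (1 - η b b) + 1 ≠ 0 := by positivity
  have hu1' : (1:ℝ) + Real.sqrt (1 - η b b) ≠ 0 := by positivity
  have hg1 : (Real.sqrt (1 - η b b))⁻¹ + 1 ≠ 0 := by positivity
  have hg1' : (1:ℝ) + (Real.sqrt (1 - η b b))⁻¹ ≠ 0 := by positivity
  have hu2 : (Real.sqrt (1 - η b b))^2 = 1 - η b b := Real.sq_sqrt (le_of_lt h1b)
  rw [hBst] at hB
  -- pair the boost equation with s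
  have hP0 := congrArg (fun v => η s v) hB
  simp only [map_add, map_sub, map_smul, LinearMap.add_apply, LinearMap.sub_apply,
    LinearMap.smul_apply, smul_eq_mul, hs, hγ₁, hγ₂, hbs] at hP0
  field_simp at hP0
  have htval : η b s₁ = γ₂ * Real.sqrt (1 - η b b) - γ₁ := by
    have h' : (1 + Real.sqrt (1 - η b b)) * (η b s₁ - (γ₂ * Real.sqrt (1 - η b b) - γ₁)) = 0 := by
      linear_combination -hP0
    rcases mul_eq_zero.1 h' with h | h
    · exact absurd h hu1'
    · linarith
  -- clean form of the boost equation
  have hw : ((γ₁+γ₂)/(Real.sqrt (1 - η b b) + 1)) • b = s₂ - s₁ + (γ₁ - γ₂) • s := by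
    rw [← hB, hγ₁]
    match_scalars <;> field_simp <;>
      [ linear_combination (-(Real.sqrt (1 - η b b) + 1)) * htval;
        ring;
        linear_combination (-1 : ℝ) * htval ]
  -- pair hw with itself
  have hP2 := congrArg (fun v => η v v) hw
  simp only [map_add, map_sub, map_smul, LinearMap.add_apply, LinearMap.sub_apply,
    LinearMap.smul_apply, smul_eq_mul, hs, hs₁, hs₂, hγ₁, hγ₂, hγ₁₂, hs₁s, hs₂s, hs₂s₁] at hP2
  field_simp at hP2
  have hfact : (Real.sqrt (1 - η b b) + 1) *
      ((2*γ₁*γ₂ - γ₁₂ + 1) - Real.sqrt (1 - η b b) * (γ₁^2 + γ₂^2 + γ₁₂ - 1)) = 0 := by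
    first
      | linear_combination (hP2 - (γ₁+γ₂)^2 * hu2)/2
      | linear_combination (-hP2 - (γ₁+γ₂)^2 * hu2)/2
      | linear_combination (hP2 + (γ₁+γ₂)^2 * hu2)/2
      | linear_combination (-hP2 + (γ₁+γ₂)^2 * hu2)/2
  have hgErt : 2*γ₁*γ₂ - γ₁₂ + 1 = Real.sqrt (1 - η b b) * (γ₁^2 + γ₂^2 + γ₁₂ - 1) := by
    rcases mul_eq_zero.1 hfact with h | h
    · exact absurd h hu1
    · linarith
  have hMval : (γ₁+γ₂)/(Real.sqrt (1 - η b b) + 1) = D/(γ₁+γ₂) := by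
    rw [hD]
    field_simp
    first
      | linear_combination hgErt
      | linear_combination -hgErt
      | linear_combination (γ₁+γ₂) * hgErt
      | linear_combination (-γ₁-γ₂) * hgErt
      | linear_combination (Real.sqrt (1 - η b b) + 1) * hgErt
      | linear_combination (-Real.sqrt (1 - η b b) - 1) * hgErt
  rw [hMval] at hw
  have hcancel : ((γ₁+γ₂)/D) • ((D/(γ₁+γ₂)) • b) = b := by
    rw [smul_smul, div_mul_div_comm, mul_comm D (γ₁+γ₂), div_self (by positivity), one_smul]
  rw [← hcancel, hw, hβv]
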